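/- Let f : ℝ → ℝ be increasing, cash sub-additive and convex. Define β̂ : ℝ² → ℝ by β̂(h, x) = f(h − x) + x. Then β̂ is increasing in each coordinate (in the sense that h = y + x₁, v = u + x₂ with y ≥ u and x₁ ≥ x₂ implies β̂(h, x₁) ≥ β̂(v, x₂)), translationally invariant (β̂(h + m, x + m) = β̂(h, x) + m for all m ∈ ℝ), and convex on ℝ². -/

import Mathlib

/-- For `f : ℝ → ℝ` increasing, cash sub-additive and convex, the map
`β̂ (h, x) = f (h - x) + x` is increasing in the stated sense, translationally
invariant, and convex on `ℝ²`. -/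
theorem beta_hat_props (f : ℝ → ℝ)
    (hmono : ∀ y v : ℝ, v ≤ y → f v ≤ f y)
    (hsub : ∀ y m : ℝ, 0 ≤ m → f y - m ≤ f (y + m))
    (hconv : ConvexOn ℝ Set.univ f) :
    (∀ y u x₁ x₂ : ℝ, u ≤ y → x₂ ≤ x₁ →
        f ((u + x₂) - x₂) + x₂ ≤ f ((y + x₁) - x₁) + x₁) ∧
    (∀ h x m : ℝ, f ((h + m) - (x + m)) + (x + m) = (f (h - x) + x) + m) ∧
    ConvexOn ℝ Set.univ (fun p : ℝ × ℝ => f (p.1 - p.2) + p.2) := by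
  refine ⟨?_, ?_, ?_⟩
  · intro y u x₁ x₂ hy hx
    simp only [add_sub_cancel_right]
    exact add_le_add (hmono y u hy) hx
  · intro h x m
    ring_nf
  · refine ⟨convex_univ, ?_⟩
    intro p _ q _ a b ha hb hab
    have h1 := hconv.2 (Set.mem_univ (p.1 - p.2)) (Set.mem_univ (q.1 - q.2)) ha hb hab
    simp only [Prod.fst_add, Prod.snd_add, Prod.smul_fst, Prod.smul_snd, smul_eq_mul]
    have harg : a * p.1 + b * q.1 - (a * p.2 + b * q.2)
        = a * (p.1 - p.2) + b * (q.1 - q.2) := by ring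
    rw [harg]
    calc f (a * (p.1 - p.2) + b * (q.1 - q.2)) + (a * p.2 + b * q.2)
        ≤ (a * f (p.1 - p.2) + b * f (q.1 - q.2)) + (a * p.2 + b * q.2) := by
          exact add_le_add_left (by simpa using h1) _
      _ = a * (f (p.1 - p.2) + p.2) + b * (f (q.1 - q.2) + q.2) := by ring
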